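/- Let s, t ≥ 2 and z be natural numbers with t·(s−2) < z ≤ t·(s−1), and set θ' = t·(2s−1). Define P_CA = {i + t·j : 0 ≤ i ≤ t−1, 0 ≤ j ≤ s−1}, P_CB = {t·q + θ'·l : 0 ≤ q ≤ s−1, 0 ≤ l ≤ t−1}, P_SA = {t·s + u : 0 ≤ u ≤ z−1}, and P_SB = {t·s + θ'·(t−1) + r : 0 ≤ r ≤ z−1}. Then the sumset (P_CA ∪ P_SA) + (P_CB ∪ P_SB) has cardinality 2·t·s + θ'·(t−1) + 2z − 1. -/
import Mathlib


open Pointwise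

/-- PolyDot-CMPC worker count in the region ts−2t < z ≤ ts−t:
|(P_CA ∪ P_SA) + (P_CB ∪ P_SB)| = 2ts + θ'·(t−1) + 2z − 1 = ψ₃,
with θ' = t·(2s−1). -/
theorem polydot_workers_psi3 (s t z : ℕ) (hs : 2 ≤ s) (ht : 2 ≤ t)
    (hz1 : t * (s - 2) < z) (hz2 : z ≤ t * (s - 1)) :
    (({n : ℕ | ∃ i j, i < t ∧ j < s ∧ n = i + t * j} ∪
      {n : ℕ | ∃ u, u < z ∧ n = t * s + u}) +
     ({n : ℕ | ∃ q l, q < s ∧ l < t ∧ n = t * q + (t * (2 * s - 1)) * l} ∪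
      {n : ℕ | ∃ r, r < z ∧ n = t * s + (t * (2 * s - 1)) * (t - 1) + r})).ncard
      = 2 * (t * s) + (t * (2 * s - 1)) * (t - 1) + 2 * z - 1 := by
  have ht0 : 0 < t := by omega
  have hz0 : 1 ≤ z := by omega
  have hs1 : t * (s - 1) + t = t * s := by rw [← Nat.mul_succ]; congr 1; omega
  have hθt : t * (2 * s - 1) + t = 2 * (t * s) := by
    rw [← Nat.mul_succ, show (2 * s - 1).succ = 2 * s by omega]; ring
  have hθ0 : 0 < t * (2 * s - 1) := Nat.mul_pos ht0 (by omega)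
  -- membership in the "A" set is exactly being < t*s + z
  have memA : ∀ a : ℕ, a < t * s + z →
      (∃ i j, i < t ∧ j < s ∧ a = i + t * j) ∨ (∃ u, u < z ∧ a = t * s + u) := by
    intro a ha
    by_cases h : a < t * s
    · left
      refine ⟨a % t, a / t, Nat.mod_lt _ ht0, ?_, (Nat.mod_add_div a t).symm⟩
      rw [Nat.div_lt_iff_lt_mul ht0, Nat.mul_comm]; exact h
    · right; exact ⟨a - t * s, by omega, by omega⟩
  have key : (({n : ℕ | ∃ i j, i < t ∧ j < s ∧ n = i + t * j} ∪
      {n : ℕ | ∃ u, u < z ∧ n = t * s + u}) +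
     ({n : ℕ | ∃ q l, q < s ∧ l < t ∧ n = t * q + (t * (2 * s - 1)) * l} ∪
      {n : ℕ | ∃ r, r < z ∧ n = t * s + (t * (2 * s - 1)) * (t - 1) + r}))
      = Set.Iio (2 * (t * s) + (t * (2 * s - 1)) * (t - 1) + 2 * z - 1) := by
    ext n
    simp only [Set.mem_add, Set.mem_union, Set.mem_setOf_eq, Set.mem_Iio]
    constructor
    · rintro ⟨a, ha, b, hb, rfl⟩
      have ha' : a < t * s + z := by
        rcases ha with ⟨i, j, hi, hj, rfl⟩ | ⟨u, hu, rfl⟩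
        · have h1 : t * j + t ≤ t * s := by
            calc t * j + t = t * (j + 1) := by ring
              _ ≤ t * s := Nat.mul_le_mul_left t hj
          omega
        · omega
      have hb' : b < t * s + (t * (2 * s - 1)) * (t - 1) + z := by
        rcases hb with ⟨q, l, hq, hl, rfl⟩ | ⟨r, hr, rfl⟩
        · have h1 : t * q + t ≤ t * s := by
            calc t * q + t = t * (q + 1) := by ring
              _ ≤ t * s := Nat.mul_le_mul_left t hq
          have h2 : (t * (2 * s - 1)) * l ≤ (t * (2 * s - 1)) * (t - 1) :=
            Nat.mul_le_mul_left _ (by omega)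
          omega
        · omega
      omega
    · intro hn
      -- find b in the B set with b ≤ n < b + (t*s + z)
      have hfind : ∃ b, ((∃ q l, q < s ∧ l < t ∧ b = t * q + (t * (2 * s - 1)) * l) ∨
          (∃ r, r < z ∧ b = t * s + (t * (2 * s - 1)) * (t - 1) + r)) ∧
          b ≤ n ∧ n < b + (t * s + z) := by
        by_cases hc : n < (t * (2 * s - 1)) * (t - 1) + t * (s - 1) + (t * s + z)
        · by_cases hll : n / (t * (2 * s - 1)) ≤ t - 1
          · have hdm : (t * (2 * s - 1)) * (n / (t * (2 * s - 1))) + n % (t * (2 * s - 1)) = n :=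
              Nat.div_add_mod n _
            have hmod : n % (t * (2 * s - 1)) < t * (2 * s - 1) := Nat.mod_lt _ hθ0
            set r := n % (t * (2 * s - 1)) with hrdef
            by_cases hqq : r / t ≤ s - 1
            · have hdm2 : t * (r / t) + r % t = r := Nat.div_add_mod r t
              have hmod2 : r % t < t := Nat.mod_lt _ ht0
              refine ⟨t * (r / t) + (t * (2 * s - 1)) * (n / (t * (2 * s - 1))),
                Or.inl ⟨r / t, n / (t * (2 * s - 1)), by omega, by omega, rfl⟩, by omega, by omega⟩
            · have hge : s * t ≤ r := by
                rw [← Nat.le_div_iff_mul_le ht0]; omega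
              have hcm : s * t = t * s := Nat.mul_comm s t
              refine ⟨t * (s - 1) + (t * (2 * s - 1)) * (n / (t * (2 * s - 1))),
                Or.inl ⟨s - 1, n / (t * (2 * s - 1)), by omega, by omega, rfl⟩, by omega, by omega⟩
          · have hbig : (t * (2 * s - 1)) * t ≤ (t * (2 * s - 1)) * (n / (t * (2 * s - 1))) :=
              Nat.mul_le_mul_left _ (by omega)
            have hdl : (t * (2 * s - 1)) * (n / (t * (2 * s - 1))) ≤ n := Nat.mul_div_le n _
            have hsplit : (t * (2 * s - 1)) * (t - 1) + t * (2 * s - 1) = (t * (2 * s - 1)) * t := by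
              rw [← Nat.mul_succ]; congr 1; omega
            refine ⟨t * (s - 1) + (t * (2 * s - 1)) * (t - 1),
              Or.inl ⟨s - 1, t - 1, by omega, by omega, rfl⟩, by omega, by omega⟩
        · by_cases hd : n < t * s + (t * (2 * s - 1)) * (t - 1) + z
          · exact ⟨n, Or.inr ⟨n - (t * s + (t * (2 * s - 1)) * (t - 1)), by omega, by omega⟩,
              le_refl n, by omega⟩
          · exact ⟨t * s + (t * (2 * s - 1)) * (t - 1) + (z - 1),
              Or.inr ⟨z - 1, by omega, rfl⟩, by omega, by omega⟩
      obtain ⟨b, hbB, hble, hlt⟩ := hfind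
      exact ⟨n - b, memA (n - b) (by omega), b, hbB, by omega⟩
  rw [key, show Set.Iio (2 * (t * s) + (t * (2 * s - 1)) * (t - 1) + 2 * z - 1)
      = ↑(Finset.range (2 * (t * s) + (t * (2 * s - 1)) * (t - 1) + 2 * z - 1)) by ext; simp,
    Set.ncard_coe_finset, Finset.card_range]
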